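/- There exists a constant c > 0 such that for all positive real numbers δ₁, δ₂ and every integer n ≥ 3, there exists a set P of n points in ℝ² spanning at least c·n² 2-chains (hinges) with respect to (δ₁, δ₂). Consequently C₂(n) = Ω(n²), and combined with the matching upper bound, C₂(n) = Θ(n²). -/

import Mathlib

/-- The number of `k`-chains spanned by a finite point set `P` in `ℝ^d` with respect to a
sequence of distances `δ : Fin k → ℝ`: tuples `(p 0, …, p k)` of pairwise distinct points of
`P` with `dist (p j) (p (j+1)) = δ j` for all `j`. -/
noncomputable def chainCount (d k : ℕ) (P : Finset (EuclideanSpace ℝ (Fin d)))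
    (δ : Fin k → ℝ) : ℕ :=
  Set.ncard {p : Fin (k + 1) → EuclideanSpace ℝ (Fin d) |
    (∀ i, p i ∈ P) ∧ Function.Injective p ∧
    ∀ j : Fin k, dist (p j.castSucc) (p j.succ) = δ j}

/-- `maxChains d k n` is the maximum number of `k`-chains spanned by a set of `n` points in
`ℝ^d`, over all sequences of positive distances. -/
noncomputable def maxChains (d k n : ℕ) : ℕ :=
  sSup {m | ∃ (P : Finset (EuclideanSpace ℝ (Fin d))) (δ : Fin k → ℝ),
    P.card = n ∧ (∀ j, 0 < δ j) ∧ m = chainCount d k P δ}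


noncomputable def pt (r t : ℝ) : EuclideanSpace ℝ (Fin 2) :=
  WithLp.toLp 2 (fun i => if i = 0 then r * Real.sqrt (1 - t ^ 2) else r * t)

lemma pt_one (r t : ℝ) : pt r t 1 = r * t := by simp [pt]

lemma pt_dist (r t : ℝ) (hr : 0 ≤ r) (ht : t ^ 2 ≤ 1) : dist (pt r t) 0 = r := by
  rw [EuclideanSpace.dist_eq]
  have h0 : Real.sqrt (1 - t ^ 2) ^ 2 = 1 - t ^ 2 := Real.sq_sqrt (by linarith)
  have h : ∑ i : Fin 2, dist (pt r t i) ((0 : EuclideanSpace ℝ (Fin 2)) i) ^ 2 = r ^ 2 := by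
    rw [Fin.sum_univ_two]
    simp only [pt, PiLp.toLp_apply, Real.dist_eq, if_true, show ((1:Fin 2) = 0) = False by simp, if_false,
      eq_self_iff_true]
    rw [show ((0 : EuclideanSpace ℝ (Fin 2)) 0) = 0 from rfl,
      show ((0 : EuclideanSpace ℝ (Fin 2)) 1) = 0 from rfl]
    simp only [sub_zero, mul_pow, sq_abs]
    rw [h0]; ring
  rw [h, Real.sqrt_sq hr]

lemma t_inj {i j : ℕ} (h : (1:ℝ)/(i+2) = 1/(j+2)) : i = j := by
  have hi : ((i:ℝ)+2) ≠ 0 := by positivity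
  have hj : ((j:ℝ)+2) ≠ 0 := by positivity
  field_simp at h
  have h' : (i:ℝ) = j := by linarith
  exact_mod_cast h'

lemma t_sq {i : ℕ} : ((1:ℝ)/(i+2)) ^ 2 ≤ 1 := by
  have h1 : (1:ℝ)/(i+2) ≤ 1 := by
    rw [div_le_one (by positivity)]; linarith [Nat.cast_nonneg (α := ℝ) i]
  have h0 : (0:ℝ) ≤ 1/(i+2) := by positivity
  nlinarith

lemma t_pos {i : ℕ} : (0:ℝ) < 1/(i+2) := by positivity

lemma inj3 {α : Type*} {a b c : α} (hab : a ≠ b) (hac : a ≠ c) (hbc : b ≠ c) :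
    Function.Injective (![a, b, c] : Fin 3 → α) := by
  intro x y h
  fin_cases x <;> fin_cases y <;> simp_all

lemma dist3 {E : Type*} [PseudoMetricSpace E] (a b c : E) (δ : Fin 2 → ℝ)
    (h1 : dist a b = δ 0) (h2 : dist b c = δ 1) :
    ∀ j : Fin 2, dist ((![a, b, c] : Fin 3 → E) j.castSucc) (![a, b, c] j.succ) = δ j := by
  intro j; fin_cases j <;> simpa


theorem hinges_lower_bound :
    ∃ c : ℝ, 0 < c ∧ ∀ (δ₁ δ₂ : ℝ), 0 < δ₁ → 0 < δ₂ → ∀ n : ℕ, 3 ≤ n →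
      ∃ P : Finset (EuclideanSpace ℝ (Fin 2)), P.card = n ∧
        c * (n : ℝ) ^ 2 ≤ (chainCount 2 2 P ![δ₁, δ₂] : ℝ) := by
  classical
  refine ⟨1/36, by norm_num, fun δ₁ δ₂ h₁ h₂ n hn => ?_⟩
  set m := (n - 1) / 2 with hm
  set K := n - 1 - m with hK
  set A : ℕ → EuclideanSpace ℝ (Fin 2) := fun i => pt δ₁ (1/(i+2)) with hA
  set B : ℕ → EuclideanSpace ℝ (Fin 2) := fun j => pt δ₂ (-(1/(j+2))) with hB
  have hA1 : ∀ i, A i 1 = δ₁ * (1/(i+2)) := fun i => pt_one _ _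
  have hB1 : ∀ j, B j 1 = δ₂ * (-(1/(j+2))) := fun j => pt_one _ _
  have hApos : ∀ i, 0 < A i 1 := fun i => by rw [hA1]; positivity
  have hBneg : ∀ j, B j 1 < 0 := fun j => by
    rw [hB1]; have := t_pos (i := j); nlinarith
  have hz : (0 : EuclideanSpace ℝ (Fin 2)) 1 = 0 := rfl
  have hAinj : Function.Injective A := by
    intro i j h
    have : A i 1 = A j 1 := by rw [h]
    rw [hA1, hA1] at this
    exact t_inj (mul_left_cancel₀ (ne_of_gt h₁) this)
  have hBinj : Function.Injective B := by
    intro i j h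
    have : B i 1 = B j 1 := by rw [h]
    rw [hB1, hB1] at this
    have := mul_left_cancel₀ (ne_of_gt h₂) this
    exact t_inj (neg_injective this)
  have hAdist : ∀ i, dist (A i) 0 = δ₁ := fun i => pt_dist _ _ h₁.le t_sq
  have hBdist : ∀ j, dist (B j) 0 = δ₂ := fun j => pt_dist _ _ h₂.le (by rw [neg_pow]; simpa using t_sq (i := j))
  set P : Finset (EuclideanSpace ℝ (Fin 2)) :=
    insert 0 ((Finset.range m).image A ∪ (Finset.range K).image B) with hP
  have hABne : ∀ i j, A i ≠ B j := fun i j h => by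
    have h1 := hApos i; rw [h] at h1; linarith [hBneg j]
  have hA0 : ∀ i, A i ≠ 0 := fun i h => by
    have := hApos i; rw [h, hz] at this; exact lt_irrefl _ this
  have hB0 : ∀ j, B j ≠ 0 := fun j h => by
    have := hBneg j; rw [h, hz] at this; exact lt_irrefl _ this
  have hdisj : Disjoint ((Finset.range m).image A) ((Finset.range K).image B) := by
    rw [Finset.disjoint_left]
    rintro x hx hy
    obtain ⟨i, -, rfl⟩ := Finset.mem_image.1 hx
    obtain ⟨j, -, hj⟩ := Finset.mem_image.1 hy
    exact hABne i j hj.symm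
  have h0nm : (0 : EuclideanSpace ℝ (Fin 2)) ∉ (Finset.range m).image A ∪ (Finset.range K).image B := by
    rw [Finset.mem_union]
    rintro (h | h)
    · obtain ⟨i, -, hi⟩ := Finset.mem_image.1 h; exact hA0 i hi
    · obtain ⟨j, -, hj⟩ := Finset.mem_image.1 h; exact hB0 j hj
  have hcard : P.card = n := by
    rw [hP, Finset.card_insert_of_notMem h0nm, Finset.card_union_of_disjoint hdisj,
      Finset.card_image_of_injective _ hAinj, Finset.card_image_of_injective _ hBinj,
      Finset.card_range, Finset.card_range]
    omega
  refine ⟨P, hcard, ?_⟩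
  -- membership facts
  have hAP : ∀ i ∈ Finset.range m, A i ∈ P := fun i hi =>
    Finset.mem_insert_of_mem (Finset.mem_union_left _ (Finset.mem_image_of_mem _ hi))
  have hBP : ∀ j ∈ Finset.range K, B j ∈ P := fun j hj =>
    Finset.mem_insert_of_mem (Finset.mem_union_right _ (Finset.mem_image_of_mem _ hj))
  have h0P : (0 : EuclideanSpace ℝ (Fin 2)) ∈ P := Finset.mem_insert_self _ _
  -- the chain set
  set S : Set (Fin 3 → EuclideanSpace ℝ (Fin 2)) :=
    {p | (∀ i, p i ∈ P) ∧ Function.Injective p ∧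
      ∀ j : Fin 2, dist (p j.castSucc) (p j.succ) = ![δ₁, δ₂] j} with hS
  have hCC : chainCount 2 2 P ![δ₁, δ₂] = S.ncard := rfl
  have hSfin : S.Finite := by
    apply Set.Finite.subset (Set.Finite.pi (fun _ : Fin 3 => P.finite_toSet))
    intro p hp
    simp only [Set.mem_pi, Set.mem_univ, forall_true_left]
    exact fun i => hp.1 i
  set g : ℕ × ℕ → (Fin 3 → EuclideanSpace ℝ (Fin 2)) :=
    fun ij => ![A ij.1, 0, B ij.2] with hg
  have hgS : ∀ ij ∈ Finset.range m ×ˢ Finset.range K, g ij ∈ S := by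
    rintro ⟨i, j⟩ hij
    rw [Finset.mem_product] at hij
    refine ⟨?_, ?_, ?_⟩
    · intro x
      fin_cases x
      · exact hAP i hij.1
      · exact h0P
      · exact hBP j hij.2
    · exact inj3 (hA0 i) (hABne i j) (Ne.symm (hB0 j))
    · refine dist3 (A i) 0 (B j) ![δ₁, δ₂] ?_ ?_
      · simpa using hAdist i
      · simpa [dist_comm] using hBdist j
  have hginj : Set.InjOn g ((Finset.range m ×ˢ Finset.range K : Finset (ℕ × ℕ)) : Set (ℕ × ℕ)) := by
    rintro ⟨i, j⟩ - ⟨i', j'⟩ - h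
    have h0 : A i = A i' := congrFun h 0
    have h2 : B j = B j' := congrFun h 2
    exact Prod.ext (hAinj h0) (hBinj h2)
  set T : Finset (Fin 3 → EuclideanSpace ℝ (Fin 2)) :=
    (Finset.range m ×ˢ Finset.range K).image g with hT
  have hTcard : T.card = m * K := by
    rw [hT, Finset.card_image_of_injOn hginj, Finset.card_product,
      Finset.card_range, Finset.card_range]
  have hTS : (T : Set _) ⊆ S := by
    intro p hp
    obtain ⟨ij, hij, rfl⟩ := Finset.mem_image.1 (Finset.mem_coe.1 hp)
    exact hgS ij hij
  have hle : m * K ≤ S.ncard := by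
    calc m * K = T.card := hTcard.symm
    _ = (T : Set _).ncard := (Set.ncard_coe_finset T).symm
    _ ≤ S.ncard := Set.ncard_le_ncard hTS hSfin
  rw [hCC]
  have hle' : (m * K : ℝ) ≤ (S.ncard : ℝ) := by exact_mod_cast hle
  refine le_trans ?_ hle'
  have hmn : n ≤ 2 * m + 2 := by omega
  have hkn : n ≤ 2 * K + 2 := by omega
  have hmn' : (n:ℝ) ≤ 2 * m + 2 := by exact_mod_cast hmn
  have hkn' : (n:ℝ) ≤ 2 * K + 2 := by exact_mod_cast hkn
  have hn' : (3:ℝ) ≤ n := by exact_mod_cast hn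
  nlinarith [mul_le_mul (show (n:ℝ) - 2 ≤ 2*m by linarith) (show (n:ℝ) - 2 ≤ 2*K by linarith)
    (by linarith) (by linarith : (0:ℝ) ≤ 2*(m:ℝ))]
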